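/- arXiv:0809.1983 — 2 statements merged into one kernel-verified Lean document; each statement's English description precedes it below -/
import Mathlib

section
/- Let K and L be star bodies in ℝ^n with radial functions ρ(K,·), ρ(L,·) > 0 continuous on S^{n−1}, and p ≥ 1. Define the L_p harmonic radial sum K +̃_p L by ρ(K +̃_p L, ·)^{−p} = ρ(K,·)^{−p} + ρ(L,·)^{−p}. Then V(K +̃_p L)^{−p/n} ≥ V(K)^{−p/n} + V(L)^{−p/n}, with equality if and only if K and L are dilates. -/
open MeasureTheory Metric Set Pointwise
open scoped ENNReal NNReal

noncomputable section

/-- Spherical Lebesgue measure on the unit sphere `S^(n-1) ⊂ ℝ^n`. -/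
def sphereMeasure (n : ℕ) : Measure (sphere (0 : EuclideanSpace ℝ (Fin n)) 1) :=
  (volume : Measure (EuclideanSpace ℝ (Fin n))).toSphere

/-- Volume of a star body in terms of its radial function:
`V = (1/n) ∫_(S^(n-1)) ρ(u)^n du`. -/
def starVolume (n : ℕ) (ρ : sphere (0 : EuclideanSpace ℝ (Fin n)) 1 → ℝ) : ℝ :=
  ((1 : ℝ) / n) * ∫ u, ρ u ^ (n : ℝ) ∂(sphereMeasure n)

namespace DualBM

variable {n : ℕ}
local notation "X" => sphere (0 : EuclideanSpace ℝ (Fin n)) 1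
local notation "μ" => sphereMeasure n

instance (n : ℕ) : IsFiniteMeasure (sphereMeasure n) := by
  rw [sphereMeasure]; infer_instance

lemma sphereMeasure_open_pos (hn : 1 ≤ n) {U : Set (sphere (0 : EuclideanSpace ℝ (Fin n)) 1)}
    (hU : IsOpen U) (hne : U.Nonempty) : 0 < sphereMeasure n U := by
  set E := EuclideanSpace ℝ (Fin n)
  set S : Set E :=
    Subtype.val '' (⇑(homeomorphUnitSphereProd E) ⁻¹' (U ×ˢ Iio ⟨1, mem_Ioi.2 one_pos⟩)) with hS
  have hvol : volume S = volume (Ioo (0:ℝ) 1 • (Subtype.val '' U)) := by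
    simpa using Measure.toSphere_apply_aux (volume : Measure E) U ⟨1, mem_Ioi.2 one_pos⟩
  have hSopen : IsOpen S := by
    apply (isOpen_compl_singleton (x := (0:E))).isOpenMap_subtype_val
    exact (hU.prod isOpen_Iio).preimage (homeomorphUnitSphereProd E).continuous
  have hSne : S.Nonempty := by
    obtain ⟨u, hu⟩ := hne
    set z := (homeomorphUnitSphereProd E).symm (u, ⟨(1:ℝ)/2, by norm_num⟩) with hz
    refine ⟨z.1, Set.mem_image_of_mem _ ?_⟩
    rw [Set.mem_preimage, hz, Homeomorph.apply_symm_apply]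
    refine Set.mk_mem_prod hu ?_
    rw [Set.mem_Iio, Subtype.mk_lt_mk]
    norm_num
  have happ : sphereMeasure n U
      = (Module.finrank ℝ E : ℝ≥0∞) * volume (Ioo (0:ℝ) 1 • (Subtype.val '' U)) :=
    Measure.toSphere_apply' _ hU.measurableSet
  rw [happ, ← hvol]
  have h1 : (0:ℝ≥0∞) < volume S := hSopen.measure_pos _ hSne
  have h2 : 0 < Module.finrank ℝ E := by
    simp only [E, finrank_euclideanSpace, Fintype.card_fin]; omega
  exact ENNReal.mul_pos (by exact_mod_cast h2.ne') h1.ne'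

lemma cont_integrable {f : X → ℝ} (hf : Continuous f) : Integrable f (sphereMeasure n) :=
  hf.integrable_of_hasCompactSupport (IsCompact.of_isClosed_subset isCompact_univ
    (isClosed_tsupport f) (subset_univ _))

lemma sphere_nonempty' (hn : 1 ≤ n) : Nonempty X := by
  haveI : Nonempty (Fin n) := ⟨⟨0, by omega⟩⟩
  haveI : Nontrivial (EuclideanSpace ℝ (Fin n)) := inferInstance
  exact (NormedSpace.sphere_nonempty.mpr zero_le_one).to_subtype

lemma integral_pos_of_pos (hn : 1 ≤ n) {f : X → ℝ} (hf : Continuous f) (h0 : ∀ x, 0 < f x) :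
    0 < ∫ x, f x ∂(sphereMeasure n) := by
  refine (integral_pos_iff_support_of_nonneg (fun x => (h0 x).le) (cont_integrable hf)).2 ?_
  have : Function.support f = univ := eq_univ_of_forall fun x => (h0 x).ne'
  rw [this]
  exact sphereMeasure_open_pos hn isOpen_univ (@univ_nonempty _ (sphere_nonempty' hn))

lemma eq_zero_of_integral_zero (hn : 1 ≤ n) {f : X → ℝ} (hf : Continuous f)
    (h0 : ∀ x, 0 ≤ f x) (hI : ∫ x, f x ∂(sphereMeasure n) = 0) : ∀ x, f x = 0 := by
  by_contra hc
  push_neg at hc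
  obtain ⟨x, hx⟩ := hc
  have hsupp : (Function.support f).Nonempty := ⟨x, hx⟩
  have : 0 < ∫ x, f x ∂(sphereMeasure n) :=
    (integral_pos_iff_support_of_nonneg h0 (cont_integrable hf)).2
      (sphereMeasure_open_pos hn (hf.isOpen_support) hsupp)
  linarith

/-- strict two-point AM-GM -/
lemma amgm_strict {x y a b : ℝ} (hx : 0 < x) (hy : 0 < y) (ha : 0 < a) (hb : 0 < b)
    (hab : a + b = 1) :
    x ^ a * y ^ b ≤ a * x + b * y ∧ (x ^ a * y ^ b = a * x + b * y ↔ x = y) := by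
  have hle : x ^ a * y ^ b ≤ a * x + b * y :=
    Real.geom_mean_le_arith_mean2_weighted ha.le hb.le hx.le hy.le hab
  refine ⟨hle, ⟨fun heq => ?_, fun heq => by
    rw [heq, ← Real.rpow_add hy, hab, Real.rpow_one, ← add_mul, hab, one_mul]⟩⟩
  by_contra hne
  have hstrict : a * Real.log x + b * Real.log y < Real.log (a * x + b * y) := by
    have := strictConcaveOn_log_Ioi.2 (mem_Ioi.2 hx) (mem_Ioi.2 hy) hne ha hb hab
    simpa [smul_eq_mul] using this
  have hxy : x ^ a * y ^ b = Real.exp (a * Real.log x + b * Real.log y) := by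
    rw [Real.exp_add, Real.rpow_def_of_pos hx, Real.rpow_def_of_pos hy,
      mul_comm (Real.log x) a, mul_comm (Real.log y) b]
  have hpos : 0 < a * x + b * y := by positivity
  have : x ^ a * y ^ b < a * x + b * y := by
    rw [hxy, ← Real.exp_log hpos]
    exact Real.exp_lt_exp.2 hstrict
  linarith [this, heq]

lemma holder_eq (hn : 1 ≤ n) {f g : X → ℝ} (hfc : Continuous f) (hgc : Continuous g)
    (hf : ∀ x, 0 < f x) (hg : ∀ x, 0 < g x) {q q' : ℝ} (hq : 1 < q) (hq' : 1 < q')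
    (hcon : 1/q + 1/q' = 1) :
    (∫ x, f x * g x ∂μ) ≤ (∫ x, f x ^ q ∂μ) ^ (1/q) * (∫ x, g x ^ q' ∂μ) ^ (1/q') ∧
    ((∫ x, f x * g x ∂μ) = (∫ x, f x ^ q ∂μ) ^ (1/q) * (∫ x, g x ^ q' ∂μ) ^ (1/q') ↔
      ∃ c : ℝ, 0 < c ∧ ∀ x, f x ^ q = c * g x ^ q') := by
  have hq0 : (0:ℝ) < q := lt_trans one_pos hq
  have hq'0 : (0:ℝ) < q' := lt_trans one_pos hq'
  have hfqc : Continuous fun x => f x ^ q := hfc.rpow_const fun x => Or.inr hq0.le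
  have hgqc : Continuous fun x => g x ^ q' := hgc.rpow_const fun x => Or.inr hq'0.le
  set If := ∫ x, f x ^ q ∂μ with hIf
  set Ig := ∫ x, g x ^ q' ∂μ with hIg
  have hIfpos : 0 < If := integral_pos_of_pos hn hfqc fun x => Real.rpow_pos_of_pos (hf x) q
  have hIgpos : 0 < Ig := integral_pos_of_pos hn hgqc fun x => Real.rpow_pos_of_pos (hg x) q'
  set F := If ^ (1/q) with hF
  set G := Ig ^ (1/q') with hG
  have hFpos : 0 < F := Real.rpow_pos_of_pos hIfpos _
  have hGpos : 0 < G := Real.rpow_pos_of_pos hIgpos _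
  have hFq : F ^ q = If := by
    rw [hF, ← Real.rpow_mul hIfpos.le, one_div_mul_cancel hq0.ne', Real.rpow_one]
  have hGq : G ^ q' = Ig := by
    rw [hG, ← Real.rpow_mul hIgpos.le, one_div_mul_cancel hq'0.ne', Real.rpow_one]
  have key : ∀ x, (f x * g x)/(F*G) ≤ (1/q) * ((f x / F)^q) + (1/q') * ((g x / G)^q') ∧
      ((f x * g x)/(F*G) = (1/q) * ((f x / F)^q) + (1/q') * ((g x / G)^q') ↔
        (f x / F)^q = (g x / G)^q') := by
    intro x
    have hX : 0 < (f x / F)^q := Real.rpow_pos_of_pos (div_pos (hf x) hFpos) _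
    have hY : 0 < (g x / G)^q' := Real.rpow_pos_of_pos (div_pos (hg x) hGpos) _
    have h1 := amgm_strict hX hY (by positivity : (0:ℝ) < 1/q) (by positivity : (0:ℝ) < 1/q') hcon
    have hXa : ((f x / F)^q) ^ (1/q) = f x / F := by
      rw [← Real.rpow_mul (div_pos (hf x) hFpos).le, mul_one_div_cancel hq0.ne', Real.rpow_one]
    have hYb : ((g x / G)^q') ^ (1/q') = g x / G := by
      rw [← Real.rpow_mul (div_pos (hg x) hGpos).le, mul_one_div_cancel hq'0.ne', Real.rpow_one]
    rw [hXa, hYb, div_mul_div_comm] at h1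
    exact h1
  have hXc : Continuous fun x => (f x / F)^q := (hfc.div_const F).rpow_const fun x => Or.inr hq0.le
  have hYc : Continuous fun x => (g x / G)^q' :=
    (hgc.div_const G).rpow_const fun x => Or.inr hq'0.le
  have hIX : ∫ x, (f x / F)^q ∂μ = 1 := by
    have : ∀ x, (f x / F)^q = f x ^ q / F ^ q := fun x => Real.div_rpow (hf x).le hFpos.le q
    simp only [this]
    rw [integral_div, hFq, ← hIf, div_self hIfpos.ne']
  have hIY : ∫ x, (g x / G)^q' ∂μ = 1 := by
    have : ∀ x, (g x / G)^q' = g x ^ q' / G ^ q' := fun x => Real.div_rpow (hg x).le hGpos.le q'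
    simp only [this]
    rw [integral_div, hGq, ← hIg, div_self hIgpos.ne']
  set h : X → ℝ := fun x => (1/q) * ((f x / F)^q) + (1/q') * ((g x / G)^q') - (f x * g x)/(F*G)
    with hh
  have hhc : Continuous h := by
    apply Continuous.sub
    · exact ((continuous_const.mul hXc).add (continuous_const.mul hYc))
    · exact (hfc.mul hgc).div_const _
  have hh0 : ∀ x, 0 ≤ h x := fun x => sub_nonneg.2 (key x).1
  have hIh : ∫ x, h x ∂μ = 1 - (∫ x, f x * g x ∂μ)/(F*G) := by
    rw [hh]
    beta_reduce
    rw [integral_sub (cont_integrable (f := fun x => (1/q) * ((f x / F)^q) + (1/q') * ((g x / G)^q'))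
      ((continuous_const.mul hXc).add (continuous_const.mul hYc)))
      (cont_integrable (f := fun x => (f x * g x)/(F*G)) ((hfc.mul hgc).div_const _))]
    rw [integral_add (cont_integrable (f := fun x => (1/q) * ((f x / F)^q)) (continuous_const.mul hXc))
      (cont_integrable (f := fun x => (1/q') * ((g x / G)^q')) (continuous_const.mul hYc))]
    rw [integral_const_mul, integral_const_mul, hIX, hIY, integral_div, mul_one, mul_one, hcon]
  have hFG : 0 < F * G := mul_pos hFpos hGpos
  have hle : (∫ x, f x * g x ∂μ) ≤ F * G := by
    have h0 : 0 ≤ ∫ x, h x ∂μ := integral_nonneg hh0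
    rw [hIh] at h0
    have : (∫ x, f x * g x ∂μ)/(F*G) ≤ 1 := by linarith
    calc (∫ x, f x * g x ∂μ) = ((∫ x, f x * g x ∂μ)/(F*G)) * (F*G) := by field_simp
    _ ≤ 1 * (F*G) := mul_le_mul_of_nonneg_right this hFG.le
    _ = F * G := one_mul _
  refine ⟨hle, ?_⟩
  constructor
  · intro heq
    have hIh0 : ∫ x, h x ∂μ = 0 := by rw [hIh, heq, div_self hFG.ne']; ring
    have hz := eq_zero_of_integral_zero hn hhc hh0 hIh0
    refine ⟨If/Ig, div_pos hIfpos hIgpos, fun x => ?_⟩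
    have hXY : (f x / F)^q = (g x / G)^q' := by
      have := (key x).2.1 (by have := hz x; rw [hh] at this; simp only at this; linarith)
      exact this
    rw [Real.div_rpow (hf x).le hFpos.le q, Real.div_rpow (hg x).le hGpos.le q',
      hFq, hGq] at hXY
    field_simp at hXY ⊢
    linarith [hXY]
  · rintro ⟨c, hc, hfg⟩
    have hcIg : If = c * Ig := by
      rw [hIf, hIg]
      simp only [hfg]
      rw [integral_const_mul]
    have hXY : ∀ x, (f x / F)^q = (g x / G)^q' := by
      intro x
      rw [Real.div_rpow (hf x).le hFpos.le q, Real.div_rpow (hg x).le hGpos.le q',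
        hFq, hGq, hfg x, hcIg, mul_div_mul_left _ _ hc.ne']
    have hIh0 : ∫ x, h x ∂μ = 0 := by
      have : ∀ x, h x = 0 := by
        intro x
        rw [hh]
        simp only
        have := (key x).2.2 (hXY x)
        linarith
      simp only [this, integral_zero]
    rw [hIh] at hIh0
    have : (∫ x, f x * g x ∂μ)/(F*G) = 1 := by linarith
    field_simp at this
    linarith

lemma key_holder (hn : 1 ≤ n) {m k : X → ℝ} (hmc : Continuous m) (hkc : Continuous k)
    (hm : ∀ x, 0 < m x) (hk : ∀ x, 0 < k x) {p : ℝ} (hp : 0 < p) :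
    (∫ x, m x ^ (n:ℝ) ∂μ) ≤
      (∫ x, m x ^ ((n:ℝ)+p) * k x ^ (-p) ∂μ) ^ ((n:ℝ)/((n:ℝ)+p)) *
        (∫ x, k x ^ (n:ℝ) ∂μ) ^ (p/((n:ℝ)+p)) ∧
    ((∫ x, m x ^ (n:ℝ) ∂μ) =
      (∫ x, m x ^ ((n:ℝ)+p) * k x ^ (-p) ∂μ) ^ ((n:ℝ)/((n:ℝ)+p)) *
        (∫ x, k x ^ (n:ℝ) ∂μ) ^ (p/((n:ℝ)+p)) ↔
      ∃ c : ℝ, 0 < c ∧ ∀ x, m x = c * k x) := by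
  set N : ℝ := (n:ℝ) with hNdef
  have hN : (0:ℝ) < N := by
    rw [hNdef]; exact_mod_cast Nat.lt_of_lt_of_le Nat.zero_lt_one hn
  have hNp : (0:ℝ) < N + p := by linarith
  set f : X → ℝ := fun x => (m x ^ (N+p) * k x ^ (-p)) ^ (N/(N+p)) with hfdef
  set g : X → ℝ := fun x => k x ^ (N*p/(N+p)) with hgdef
  set q : ℝ := (N+p)/N with hqdef
  set q' : ℝ := (N+p)/p with hq'def
  have hbase : ∀ x, 0 < m x ^ (N+p) * k x ^ (-p) := fun x =>
    mul_pos (Real.rpow_pos_of_pos (hm x) _) (Real.rpow_pos_of_pos (hk x) _)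
  have hfpos : ∀ x, 0 < f x := fun x => Real.rpow_pos_of_pos (hbase x) _
  have hgpos : ∀ x, 0 < g x := fun x => Real.rpow_pos_of_pos (hk x) _
  have hfc : Continuous f := by
    apply Continuous.rpow_const _ (fun x => Or.inl (hbase x).ne')
    exact (hmc.rpow_const fun x => Or.inr hNp.le).mul
      (hkc.rpow_const fun x => Or.inl (hk x).ne')
  have hgc : Continuous g := hkc.rpow_const fun x => Or.inl (hk x).ne'
  have hq : 1 < q := by rw [hqdef]; rw [lt_div_iff₀ hN]; linarith
  have hq' : 1 < q' := by rw [hq'def]; rw [lt_div_iff₀ hp]; linarith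
  have hcon : 1/q + 1/q' = 1 := by rw [hqdef, hq'def]; field_simp
  have h1q : 1/q = N/(N+p) := by rw [hqdef]; rw [one_div_div]
  have h1q' : 1/q' = p/(N+p) := by rw [hq'def]; rw [one_div_div]
  have hfg : ∀ x, f x * g x = m x ^ N := by
    intro x
    rw [hfdef, hgdef]
    simp only
    rw [Real.mul_rpow (Real.rpow_pos_of_pos (hm x) _).le (Real.rpow_pos_of_pos (hk x) _).le,
      ← Real.rpow_mul (hm x).le, ← Real.rpow_mul (hk x).le, mul_assoc, ← Real.rpow_add (hk x)]
    have e1 : (N+p) * (N/(N+p)) = N := by field_simp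
    have e2 : -p * (N/(N+p)) + N*p/(N+p) = 0 := by field_simp; ring
    rw [e1, e2, Real.rpow_zero, mul_one]
  have hfq : ∀ x, f x ^ q = m x ^ (N+p) * k x ^ (-p) := by
    intro x
    rw [hfdef, hqdef]
    simp only
    rw [← Real.rpow_mul (hbase x).le]
    have : N/(N+p) * ((N+p)/N) = 1 := by field_simp
    rw [this, Real.rpow_one]
  have hgq : ∀ x, g x ^ q' = k x ^ N := by
    intro x
    rw [hgdef, hq'def]
    simp only
    rw [← Real.rpow_mul (hk x).le]
    have : N*p/(N+p) * ((N+p)/p) = N := by field_simp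
    rw [this]
  have H := holder_eq hn hfc hgc hfpos hgpos hq hq' hcon
  have hIfg : (∫ x, f x * g x ∂μ) = ∫ x, m x ^ N ∂μ := by simp only [hfg]
  have hIfq : (∫ x, f x ^ q ∂μ) = ∫ x, m x ^ (N+p) * k x ^ (-p) ∂μ := by simp only [hfq]
  have hIgq : (∫ x, g x ^ q' ∂μ) = ∫ x, k x ^ N ∂μ := by simp only [hgq]
  rw [hIfg, hIfq, hIgq, h1q, h1q'] at H
  refine ⟨H.1, H.2.trans ?_⟩
  constructor
  · rintro ⟨c, hc, hceq⟩
    refine ⟨c ^ (1/(N+p)), Real.rpow_pos_of_pos hc _, fun x => ?_⟩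
    have h0 := hceq x
    rw [hfq x, hgq x] at h0
    have h2 : m x ^ (N+p) = c * k x ^ (N+p) := by
      have := congrArg (fun t => t * k x ^ p) h0
      rw [mul_assoc, ← Real.rpow_add (hk x), neg_add_cancel, Real.rpow_zero, mul_one,
        mul_assoc, ← Real.rpow_add (hk x)] at this
      exact this
    have h3 := congrArg (fun t => t ^ (1/(N+p))) h2
    rw [← Real.rpow_mul (hm x).le, mul_one_div_cancel hNp.ne', Real.rpow_one,
      Real.mul_rpow hc.le (Real.rpow_pos_of_pos (hk x) _).le,
      ← Real.rpow_mul (hk x).le, mul_one_div_cancel hNp.ne', Real.rpow_one] at h3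
    exact h3
  · rintro ⟨c, hc, hceq⟩
    refine ⟨c ^ (N+p), Real.rpow_pos_of_pos hc _, fun x => ?_⟩
    rw [hfq x, hgq x, hceq x, Real.mul_rpow hc.le (hk x).le, mul_assoc,
      ← Real.rpow_add (hk x)]
    have : N + p + -p = N := by ring
    rw [this]

lemma rpow_eq_rpow_iff {x y z : ℝ} (hx : 0 ≤ x) (hy : 0 ≤ y) (hz : 0 < z) :
    x ^ z = y ^ z ↔ x = y := by
  rw [le_antisymm_iff, le_antisymm_iff, Real.rpow_le_rpow_iff hx hy hz,
    Real.rpow_le_rpow_iff hy hx hz]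

lemma holder_transform {Im A Ia N p : ℝ} (hIm : 0 < Im) (hA : 0 < A) (hIa : 0 < Ia)
    (hN : 0 < N) (hp : 0 < p) :
    (Im ≤ A ^ (N/(N+p)) * Ia ^ (p/(N+p)) ↔ Im ^ ((N+p)/N) * Ia ^ (-(p/N)) ≤ A) ∧
    (Im = A ^ (N/(N+p)) * Ia ^ (p/(N+p)) ↔ Im ^ ((N+p)/N) * Ia ^ (-(p/N)) = A) := by
  have hNp : (0:ℝ) < N + p := by linarith
  have hr : (0:ℝ) < (N+p)/N := by positivity
  have hRHS : 0 < A ^ (N/(N+p)) * Ia ^ (p/(N+p)) :=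
    mul_pos (Real.rpow_pos_of_pos hA _) (Real.rpow_pos_of_pos hIa _)
  have hpow : (A ^ (N/(N+p)) * Ia ^ (p/(N+p))) ^ ((N+p)/N) = A * Ia ^ (p/N) := by
    rw [Real.mul_rpow (Real.rpow_pos_of_pos hA _).le (Real.rpow_pos_of_pos hIa _).le,
      ← Real.rpow_mul hA.le, ← Real.rpow_mul hIa.le]
    have e1 : N/(N+p) * ((N+p)/N) = 1 := by field_simp
    have e2 : p/(N+p) * ((N+p)/N) = p/N := by field_simp
    rw [e1, e2, Real.rpow_one]
  have hIaN : 0 < Ia ^ (p/N) := Real.rpow_pos_of_pos hIa _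
  have hneg : Ia ^ (-(p/N)) = (Ia ^ (p/N))⁻¹ := Real.rpow_neg hIa.le _
  constructor
  · rw [← Real.rpow_le_rpow_iff hIm.le hRHS.le hr, hpow, hneg, ← div_eq_mul_inv,
      div_le_iff₀ hIaN]
  · rw [← rpow_eq_rpow_iff hIm.le hRHS.le hr, hpow, hneg, ← div_eq_mul_inv,
      div_eq_iff hIaN.ne']

end DualBM

open DualBM

/-- Dual `L_p` Brunn–Minkowski inequality: for star bodies `K, L` (given by positive
continuous radial functions `ρK, ρL`) and `p ≥ 1`, the `L_p` harmonic radial sum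
`ρ(K +̃_p L,·)^(-p) = ρK^(-p) + ρL^(-p)` satisfies
`V(K +̃_p L)^(-p/n) ≥ V(K)^(-p/n) + V(L)^(-p/n)`, with equality iff `K, L` are dilates. -/
theorem stmt10 (n : ℕ) (hn : 2 ≤ n)
    (ρK ρL : sphere (0 : EuclideanSpace ℝ (Fin n)) 1 → ℝ)
    (hKc : Continuous ρK) (hLc : Continuous ρL)
    (hK : ∀ u, 0 < ρK u) (hL : ∀ u, 0 < ρL u) (p : ℝ) (hp : 1 ≤ p) :
    starVolume n (fun u => (ρK u ^ (-p) + ρL u ^ (-p)) ^ (-1 / p)) ^ (-p / (n : ℝ)) ≥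
      starVolume n ρK ^ (-p / (n : ℝ)) + starVolume n ρL ^ (-p / (n : ℝ)) ∧
    (starVolume n (fun u => (ρK u ^ (-p) + ρL u ^ (-p)) ^ (-1 / p)) ^ (-p / (n : ℝ)) =
        starVolume n ρK ^ (-p / (n : ℝ)) + starVolume n ρL ^ (-p / (n : ℝ)) ↔
      ∃ l : ℝ, 0 < l ∧ ∀ u, ρK u = l * ρL u) := by
  have hn1 : 1 ≤ n := by omega
  have hN : (0:ℝ) < (n:ℝ) := by exact_mod_cast Nat.lt_of_lt_of_le Nat.zero_lt_one hn1
  have hp0 : (0:ℝ) < p := lt_of_lt_of_le one_pos hp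
  set μ := sphereMeasure n with hμ
  set N : ℝ := (n:ℝ) with hNdef
  set ρM : (sphere (0 : EuclideanSpace ℝ (Fin n)) 1) → ℝ :=
    fun u => (ρK u ^ (-p) + ρL u ^ (-p)) ^ (-1 / p) with hMdef
  have hS : ∀ u, 0 < ρK u ^ (-p) + ρL u ^ (-p) := fun u =>
    add_pos (Real.rpow_pos_of_pos (hK u) _) (Real.rpow_pos_of_pos (hL u) _)
  have hMpos : ∀ u, 0 < ρM u := fun u => Real.rpow_pos_of_pos (hS u) _
  have hMc : Continuous ρM := by
    apply Continuous.rpow_const _ (fun u => Or.inl (hS u).ne')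
    exact (hKc.rpow_const fun u => Or.inl (hK u).ne').add
      (hLc.rpow_const fun u => Or.inl (hL u).ne')
  have hMp : ∀ u, ρM u ^ (-p) = ρK u ^ (-p) + ρL u ^ (-p) := by
    intro u
    rw [hMdef]
    simp only
    rw [← Real.rpow_mul (hS u).le]
    have : -1/p * -p = 1 := by field_simp
    rw [this, Real.rpow_one]
  -- integrals
  set Im := ∫ u, ρM u ^ N ∂μ with hIm
  set Ia := ∫ u, ρK u ^ N ∂μ with hIa
  set Ib := ∫ u, ρL u ^ N ∂μ with hIb
  set A := ∫ u, ρM u ^ (N+p) * ρK u ^ (-p) ∂μ with hA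
  set B := ∫ u, ρM u ^ (N+p) * ρL u ^ (-p) ∂μ with hB
  have hImpos : 0 < Im := integral_pos_of_pos hn1 (hMc.rpow_const fun u => Or.inr hN.le)
    fun u => Real.rpow_pos_of_pos (hMpos u) _
  have hIapos : 0 < Ia := integral_pos_of_pos hn1 (hKc.rpow_const fun u => Or.inr hN.le)
    fun u => Real.rpow_pos_of_pos (hK u) _
  have hIbpos : 0 < Ib := integral_pos_of_pos hn1 (hLc.rpow_const fun u => Or.inr hN.le)
    fun u => Real.rpow_pos_of_pos (hL u) _
  have hNp : (0:ℝ) < N + p := by linarith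
  have hcontA : Continuous fun u => ρM u ^ (N+p) * ρK u ^ (-p) :=
    (hMc.rpow_const fun u => Or.inr hNp.le).mul (hKc.rpow_const fun u => Or.inl (hK u).ne')
  have hcontB : Continuous fun u => ρM u ^ (N+p) * ρL u ^ (-p) :=
    (hMc.rpow_const fun u => Or.inr hNp.le).mul (hLc.rpow_const fun u => Or.inl (hL u).ne')
  have hApos : 0 < A := integral_pos_of_pos hn1 hcontA fun u =>
    mul_pos (Real.rpow_pos_of_pos (hMpos u) _) (Real.rpow_pos_of_pos (hK u) _)
  have hBpos : 0 < B := integral_pos_of_pos hn1 hcontB fun u =>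
    mul_pos (Real.rpow_pos_of_pos (hMpos u) _) (Real.rpow_pos_of_pos (hL u) _)
  have hsum : Im = A + B := by
    have hpt : ∀ u, ρM u ^ N = ρM u ^ (N+p) * ρK u ^ (-p) + ρM u ^ (N+p) * ρL u ^ (-p) := by
      intro u
      rw [← mul_add, ← hMp u, ← Real.rpow_add (hMpos u), add_neg_cancel_right]
    rw [hIm, hA, hB]
    simp only [hpt]
    rw [integral_add (cont_integrable hcontA) (cont_integrable hcontB)]
  -- Hölder applications
  have HK := key_holder hn1 hMc hKc hMpos hK hp0
  have HL := key_holder hn1 hMc hLc hMpos hL hp0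
  have hTA := holder_transform hImpos hApos hIapos hN hp0
  have hTB := holder_transform hImpos hBpos hIbpos hN hp0
  have hAge : Im ^ ((N+p)/N) * Ia ^ (-(p/N)) ≤ A := hTA.1.mp HK.1
  have hBge : Im ^ ((N+p)/N) * Ib ^ (-(p/N)) ≤ B := hTB.1.mp HL.1
  have hAeq : (Im ^ ((N+p)/N) * Ia ^ (-(p/N)) = A) ↔ ∃ c : ℝ, 0 < c ∧ ∀ x, ρM x = c * ρK x :=
    hTA.2.symm.trans HK.2
  have hBeq : (Im ^ ((N+p)/N) * Ib ^ (-(p/N)) = B) ↔ ∃ c : ℝ, 0 < c ∧ ∀ x, ρM x = c * ρL x :=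
    hTB.2.symm.trans HL.2
  have hrpos : 0 < Im ^ ((N+p)/N) := Real.rpow_pos_of_pos hImpos _
  -- relation between Im^(-(p/N)) and Im, Im^r
  have hImsplit : ∀ s : ℝ, (Im ^ (-(p/N)) ≤ s ↔ Im ≤ Im ^ ((N+p)/N) * s) ∧
      (s ≤ Im ^ (-(p/N)) ↔ Im ^ ((N+p)/N) * s ≤ Im) ∧
      (Im ^ (-(p/N)) = s ↔ Im = Im ^ ((N+p)/N) * s) := by
    intro s
    have hmulId : Im ^ (-(p/N)) * Im ^ ((N+p)/N) = Im := by
      rw [← Real.rpow_add hImpos]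
      have : -(p/N) + (N+p)/N = 1 := by field_simp; ring
      rw [this, Real.rpow_one]
    constructor
    · constructor
      · intro hle
        calc Im = Im ^ (-(p/N)) * Im ^ ((N+p)/N) := hmulId.symm
        _ ≤ s * Im ^ ((N+p)/N) := mul_le_mul_of_nonneg_right hle hrpos.le
        _ = Im ^ ((N+p)/N) * s := mul_comm _ _
      · intro hle
        have := mul_le_mul_of_nonneg_right hle (le_of_lt (Real.rpow_pos_of_pos hImpos (-(p/N))))
        -- alternative route
        have h2 : Im ^ (-(p/N)) * Im ^ ((N+p)/N) ≤ s * Im ^ ((N+p)/N) := by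
          rw [hmulId]
          calc Im ≤ Im ^ ((N+p)/N) * s := hle
          _ = s * Im ^ ((N+p)/N) := mul_comm _ _
        exact le_of_mul_le_mul_right h2 hrpos
    constructor
    · constructor
      · intro hle
        have h2 : s * Im ^ ((N+p)/N) ≤ Im ^ (-(p/N)) * Im ^ ((N+p)/N) :=
          mul_le_mul_of_nonneg_right hle hrpos.le
        rw [hmulId] at h2
        calc Im ^ ((N+p)/N) * s = s * Im ^ ((N+p)/N) := mul_comm _ _
        _ ≤ Im := h2
      · intro hle
        have h2 : s * Im ^ ((N+p)/N) ≤ Im ^ (-(p/N)) * Im ^ ((N+p)/N) := by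
          rw [hmulId]
          calc s * Im ^ ((N+p)/N) = Im ^ ((N+p)/N) * s := mul_comm _ _
          _ ≤ Im := hle
        exact le_of_mul_le_mul_right h2 hrpos
    · constructor
      · intro heq
        calc Im = Im ^ (-(p/N)) * Im ^ ((N+p)/N) := hmulId.symm
        _ = s * Im ^ ((N+p)/N) := by rw [heq]
        _ = Im ^ ((N+p)/N) * s := mul_comm _ _
      · intro heq
        have h2 : Im ^ (-(p/N)) * Im ^ ((N+p)/N) = s * Im ^ ((N+p)/N) := by
          rw [hmulId]
          rw [mul_comm s _]
          exact heq
        exact mul_right_cancel₀ hrpos.ne' h2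
  -- unfold starVolume
  have hSV : starVolume n ρM = (1/N) * Im ∧ starVolume n ρK = (1/N) * Ia ∧
      starVolume n ρL = (1/N) * Ib := ⟨rfl, rfl, rfl⟩
  have hc : (0:ℝ) < 1/N := by positivity
  have hκ : (0:ℝ) < (1/N) ^ (-p/N) := Real.rpow_pos_of_pos hc _
  have hfactor : ∀ I : ℝ, 0 < I → ((1/N) * I) ^ (-p/N) = (1/N)^(-p/N) * I ^ (-p/N) :=
    fun I hI => Real.mul_rpow hc.le hI.le
  have hgoalK : starVolume n ρK ^ (-p/N) = (1/N)^(-p/N) * Ia ^ (-p/N) := by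
    rw [hSV.2.1, hfactor _ hIapos]
  have hgoalL : starVolume n ρL ^ (-p/N) = (1/N)^(-p/N) * Ib ^ (-p/N) := by
    rw [hSV.2.2, hfactor _ hIbpos]
  have hgoalM : starVolume n ρM ^ (-p/N) = (1/N)^(-p/N) * Im ^ (-p/N) := by
    rw [hSV.1, hfactor _ hImpos]
  have hnegdiv : ∀ I : ℝ, I ^ (-p/N) = I ^ (-(p/N)) := by
    intro I; rw [neg_div]
  -- core inequality and equality condition in terms of Im, Ia, Ib
  have hcore_le : Ia ^ (-(p/N)) + Ib ^ (-(p/N)) ≤ Im ^ (-(p/N)) := by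
    rw [(hImsplit _).2.1]
    calc Im ^ ((N+p)/N) * (Ia ^ (-(p/N)) + Ib ^ (-(p/N)))
        = Im ^ ((N+p)/N) * Ia ^ (-(p/N)) + Im ^ ((N+p)/N) * Ib ^ (-(p/N)) := by ring
    _ ≤ A + B := add_le_add hAge hBge
    _ = Im := hsum.symm
  have hcore_eq : (Im ^ (-(p/N)) = Ia ^ (-(p/N)) + Ib ^ (-(p/N))) ↔
      ((Im ^ ((N+p)/N) * Ia ^ (-(p/N)) = A) ∧ (Im ^ ((N+p)/N) * Ib ^ (-(p/N)) = B)) := by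
    rw [(hImsplit _).2.2]
    constructor
    · intro heq
      have heq2 : A + B
          = Im ^ ((N+p)/N) * Ia ^ (-(p/N)) + Im ^ ((N+p)/N) * Ib ^ (-(p/N)) := by
        calc A + B = Im := hsum.symm
        _ = Im ^ ((N+p)/N) * (Ia ^ (-(p/N)) + Ib ^ (-(p/N))) := heq
        _ = Im ^ ((N+p)/N) * Ia ^ (-(p/N)) + Im ^ ((N+p)/N) * Ib ^ (-(p/N)) := by ring
      constructor <;> linarith [hAge, hBge]
    · rintro ⟨h1, h2⟩
      calc Im = A + B := hsum
      _ = Im ^ ((N+p)/N) * Ia ^ (-(p/N)) + Im ^ ((N+p)/N) * Ib ^ (-(p/N)) := by rw [h1, h2]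
      _ = Im ^ ((N+p)/N) * (Ia ^ (-(p/N)) + Ib ^ (-(p/N))) := by ring
  refine ⟨?_, ?_⟩
  · -- the inequality
    rw [ge_iff_le, hgoalK, hgoalL, hgoalM, hnegdiv Ia, hnegdiv Ib, hnegdiv Im, ← mul_add]
    exact mul_le_mul_of_nonneg_left hcore_le hκ.le
  · rw [hgoalK, hgoalL, hgoalM, hnegdiv Ia, hnegdiv Ib, hnegdiv Im, ← mul_add]
    have hcancel : ((1/N)^(-p/N) * Im ^ (-(p/N))
        = (1/N)^(-p/N) * (Ia ^ (-(p/N)) + Ib ^ (-(p/N)))) ↔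
        Im ^ (-(p/N)) = Ia ^ (-(p/N)) + Ib ^ (-(p/N)) :=
      ⟨fun h => mul_left_cancel₀ hκ.ne' h, fun h => by rw [h]⟩
    rw [hcancel, hcore_eq, hAeq, hBeq]
    constructor
    · rintro ⟨⟨cK, hcK, hKe⟩, ⟨cL, hcL, hLe⟩⟩
      refine ⟨cL/cK, div_pos hcL hcK, fun u => ?_⟩
      have hKL : cK * ρK u = cL * ρL u := (hKe u).symm.trans (hLe u)
      rw [div_mul_eq_mul_div, eq_div_iff hcK.ne']
      linarith [hKL]
    · rintro ⟨l, hl, hKL⟩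
      have hbasepos : (0:ℝ) < l^(-p) + 1 := by positivity
      set cL : ℝ := (l^(-p) + 1) ^ (-1/p) with hcLdef
      have hcLpos : 0 < cL := Real.rpow_pos_of_pos hbasepos _
      have hMl : ∀ u, ρM u = cL * ρL u := by
        intro u
        rw [hMdef]
        simp only
        rw [hKL u, Real.mul_rpow hl.le (hL u).le]
        have hrw : l ^ (-p) * ρL u ^ (-p) + ρL u ^ (-p) = (l^(-p)+1) * ρL u ^ (-p) := by ring
        rw [hrw, Real.mul_rpow hbasepos.le (Real.rpow_pos_of_pos (hL u) _).le,
          ← Real.rpow_mul (hL u).le]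
        have h1 : -p * (-1/p) = 1 := by field_simp
        rw [h1, Real.rpow_one]
      have hMk : ∀ u, ρM u = (cL/l) * ρK u := by
        intro u
        rw [hMl u, hKL u]
        field_simp
      exact ⟨⟨cL/l, div_pos hcLpos hl, hMk⟩, ⟨cL, hcLpos, hMl⟩⟩
end
end

section
/- Let K be a convex body in ℝ^n containing the origin in its interior, with L_p surface area measure S_p(K,·) on S^{n−1}, and let L be a star body, with p > 1 and τ ∈ [−1,1]. Define Π_p^τ K by h(Π_p^τ K, u)^p = c_{n,p}(τ) ∫_{S^{n−1}} φ_τ(u⋅v)^p dS_p(K,v), and M_p^τ L by h(M_p^τ L, u)^p = c_{n,p}(τ) ∫_{S^{n−1}} φ_τ(u⋅v)^p ρ(L,v)^{n+p} dv. Then the integral identity V_p(K, M_p^τ L) = Ṽ_{−p}(L, Π_p^{τ,*} K) holds, where V_p(K,Q) = (1/n)∫ h(Q,u)^p dS_p(K,u), Ṽ_{−p}(L,Q) = (1/n)∫ ρ(L,u)^{n+p} ρ(Q,u)^{−p} du, and Π_p^{τ,*}K is the polar body of Π_p^τ K (so ρ(Π_p^{τ,*}K, ·) = h(Π_p^τ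 K, ·)^{−1}). -/
open MeasureTheory Metric

noncomputable section

/-- The integral identity `V_p(K, M_p^τ L) = Ṽ_(-p)(L, Π_p^(τ,*) K)`: here `μ = S_p(K,·)` is
the `L_p` surface area measure of `K`, `ρL` is the radial function of the star body `L`,
`hPi = h(Π_p^τ K,·)` and `hM = h(M_p^τ L,·)` are given by their defining integral formulas, and
`ρ(Π_p^(τ,*)K,·) = hΠ⁻¹`. -/
theorem stmt15 (n : ℕ) (hn : 2 ≤ n) (p τ cτ : ℝ) (hp : 1 < p)
    (hτ₁ : -1 ≤ τ) (hτ₂ : τ ≤ 1) (hcτ : 0 < cτ)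
    (μ : Measure (sphere (0 : EuclideanSpace ℝ (Fin n)) 1)) [IsFiniteMeasure μ]
    (ρL : sphere (0 : EuclideanSpace ℝ (Fin n)) 1 → ℝ)
    (hρc : Continuous ρL) (hρ : ∀ v, 0 < ρL v)
    (hPi hM : sphere (0 : EuclideanSpace ℝ (Fin n)) 1 → ℝ)
    (hPipos : ∀ u, 0 < hPi u)
    (hPidef : ∀ u, hPi u ^ p = cτ * ∫ v,
      (|(inner ℝ (u : EuclideanSpace ℝ (Fin n)) (v : EuclideanSpace ℝ (Fin n)) : ℝ)| +
        τ * (inner ℝ (u : EuclideanSpace ℝ (Fin n)) (v : EuclideanSpace ℝ (Fin n)) : ℝ)) ^ p ∂μ)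
    (hMdef : ∀ u, hM u ^ p = cτ * ∫ v,
      (|(inner ℝ (u : EuclideanSpace ℝ (Fin n)) (v : EuclideanSpace ℝ (Fin n)) : ℝ)| +
        τ * (inner ℝ (u : EuclideanSpace ℝ (Fin n)) (v : EuclideanSpace ℝ (Fin n)) : ℝ)) ^ p *
        ρL v ^ ((n : ℝ) + p) ∂(sphereMeasure n)) :
    ((1 : ℝ) / n) * ∫ u, hM u ^ p ∂μ =
      ((1 : ℝ) / n) * ∫ u, ρL u ^ ((n : ℝ) + p) * ((hPi u)⁻¹) ^ (-p) ∂(sphereMeasure n) := by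
  haveI : IsFiniteMeasure (sphereMeasure n) := by unfold sphereMeasure; infer_instance
  set f : sphere (0 : EuclideanSpace ℝ (Fin n)) 1 →
      sphere (0 : EuclideanSpace ℝ (Fin n)) 1 → ℝ := fun u v =>
    (|(inner ℝ (u : EuclideanSpace ℝ (Fin n)) (v : EuclideanSpace ℝ (Fin n)) : ℝ)| +
      τ * (inner ℝ (u : EuclideanSpace ℝ (Fin n)) (v : EuclideanSpace ℝ (Fin n)) : ℝ)) ^ p
    with hfdef
  have hsymm : ∀ u v, f u v = f v u := by
    intro u v
    simp only [hfdef, real_inner_comm (u : EuclideanSpace ℝ (Fin n))]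
  have hcont : Continuous (Function.uncurry fun u v => f u v * ρL v ^ ((n : ℝ) + p)) := by
    have h1 : Continuous fun q : (sphere (0 : EuclideanSpace ℝ (Fin n)) 1) ×
        (sphere (0 : EuclideanSpace ℝ (Fin n)) 1) =>
        (inner ℝ (q.1 : EuclideanSpace ℝ (Fin n)) (q.2 : EuclideanSpace ℝ (Fin n)) : ℝ) :=
      Continuous.inner (continuous_subtype_val.comp continuous_fst)
        (continuous_subtype_val.comp continuous_snd)
    have h3 : Continuous fun q : (sphere (0 : EuclideanSpace ℝ (Fin n)) 1) ×
        (sphere (0 : EuclideanSpace ℝ (Fin n)) 1) =>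
        (|(inner ℝ (q.1 : EuclideanSpace ℝ (Fin n)) (q.2 : EuclideanSpace ℝ (Fin n)) : ℝ)| +
          τ * (inner ℝ (q.1 : EuclideanSpace ℝ (Fin n)) (q.2 : EuclideanSpace ℝ (Fin n)) : ℝ)) ^ p :=
      (h1.abs.add (continuous_const.mul h1)).rpow_const
        (fun q => Or.inr (le_of_lt (lt_trans one_pos hp)))
    have h4 := ((hρc.comp continuous_snd).rpow_const
      (fun q : (sphere (0 : EuclideanSpace ℝ (Fin n)) 1) ×
        (sphere (0 : EuclideanSpace ℝ (Fin n)) 1) => Or.inl (ne_of_gt (hρ q.2))) :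
      Continuous fun q : (sphere (0 : EuclideanSpace ℝ (Fin n)) 1) ×
        (sphere (0 : EuclideanSpace ℝ (Fin n)) 1) => ρL q.2 ^ ((n : ℝ) + p))
    simp only [hfdef, Function.uncurry]
    exact h3.mul h4
  have hint : Integrable (Function.uncurry fun u v => f u v * ρL v ^ ((n : ℝ) + p))
      (μ.prod (sphereMeasure n)) :=
    hcont.integrable_of_hasCompactSupport (HasCompactSupport.of_compactSpace _)
  have key : ∫ u, hM u ^ p ∂μ =
      ∫ v, ρL v ^ ((n : ℝ) + p) * ((hPi v)⁻¹) ^ (-p) ∂(sphereMeasure n) := by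
    calc ∫ u, hM u ^ p ∂μ
        = ∫ u, cτ * ∫ v, f u v * ρL v ^ ((n : ℝ) + p) ∂(sphereMeasure n) ∂μ :=
          integral_congr_ae (Filter.Eventually.of_forall fun u => hMdef u)
      _ = cτ * ∫ u, ∫ v, f u v * ρL v ^ ((n : ℝ) + p) ∂(sphereMeasure n) ∂μ :=
          integral_const_mul _ _
      _ = cτ * ∫ v, ∫ u, f u v * ρL v ^ ((n : ℝ) + p) ∂μ ∂(sphereMeasure n) := by
          rw [integral_integral_swap hint]
      _ = ∫ v, ρL v ^ ((n : ℝ) + p) * ((hPi v)⁻¹) ^ (-p) ∂(sphereMeasure n) := by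
          rw [← integral_const_mul]
          refine integral_congr_ae (Filter.Eventually.of_forall fun v => ?_)
          have hinv : ((hPi v)⁻¹) ^ (-p) = hPi v ^ p := by
            rw [Real.rpow_neg (inv_nonneg.mpr (hPipos v).le),
              Real.inv_rpow (hPipos v).le, inv_inv]
          simp only [hfdef]
          have hsw : (∫ u, (|(inner ℝ (u : EuclideanSpace ℝ (Fin n))
                (v : EuclideanSpace ℝ (Fin n)) : ℝ)| +
                τ * (inner ℝ (u : EuclideanSpace ℝ (Fin n)) (v : EuclideanSpace ℝ (Fin n)) : ℝ)) ^ p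
                ∂μ) =
              ∫ u, (|(inner ℝ (v : EuclideanSpace ℝ (Fin n)) (u : EuclideanSpace ℝ (Fin n)) : ℝ)| +
                τ * (inner ℝ (v : EuclideanSpace ℝ (Fin n)) (u : EuclideanSpace ℝ (Fin n)) : ℝ)) ^ p
                ∂μ :=
            integral_congr_ae (Filter.Eventually.of_forall fun u => by
              simp only [real_inner_comm (u : EuclideanSpace ℝ (Fin n))])
          rw [hinv, hPidef v, integral_mul_const, hsw]
          ring
  rw [key]

end
end
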